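/- Under the sink structure hypotheses, for every α ∈ (0,1) and every initial vector x(0) ∈ ℝ^n, the averaging dynamics x(t) = P_α^t x(0) converges as t → ∞ to H x̄, where H ∈ ℝ^{n×s} is the unique nonnegative matrix with H𝟙 = 𝟙, LH = 0 and boundary values H_{ik} = 1 on S_k, H_{ik} = 0 on S_{−k}, and where x̄ ∈ ℝ^s has entries x̄_k = ∑_{i∈S_k} π^{(k)}_i x_i(0), with π^{(k)} the unique invariant probability vector of the row-stochastic matrix obtained by restricting P to S_k × S_k. -/

import Mathlib

open Matrix

open Finset


lemma aux_mul_entry_ge {n : ℕ} (A B : Matrix (Fin n) (Fin n) ℝ)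
    (hA : ∀ i j, 0 ≤ A i j) (hB : ∀ i j, 0 ≤ B i j) (i j l : Fin n) :
    A i j * B j l ≤ (A * B) i l := by
  rw [Matrix.mul_apply]
  exact Finset.single_le_sum (fun k _ => mul_nonneg (hA i k) (hB k l)) (mem_univ j)

lemma aux_mulVec_bound {n : ℕ} (A : Matrix (Fin n) (Fin n) ℝ)
    (hnn : ∀ i j, 0 ≤ A i j) (hrow : ∀ i, ∑ j, A i j = 1)
    (y : Fin n → ℝ) (c : ℝ) (hc : ∀ j, |y j| ≤ c) (i : Fin n) :
    |A.mulVec y i| ≤ c := by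
  have : A.mulVec y i = ∑ j, A i j * y j := by simp [Matrix.mulVec, dotProduct]
  rw [this]
  calc |∑ j, A i j * y j| ≤ ∑ j, |A i j * y j| := Finset.abs_sum_le_sum_abs _ _
    _ ≤ ∑ j, A i j * c := by
        refine Finset.sum_le_sum fun j _ => ?_
        rw [abs_mul, abs_of_nonneg (hnn i j)]
        exact mul_le_mul_of_nonneg_left (hc j) (hnn i j)
    _ = c := by rw [← Finset.sum_mul, hrow, one_mul]

lemma aux_contraction_upper {n s : ℕ} (S : Fin s → Finset (Fin n))
    (A : Matrix (Fin n) (Fin n) ℝ)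
    (hnn : ∀ i j, 0 ≤ A i j) (hrow : ∀ i, ∑ j, A i j = 1)
    (δ : ℝ) (hA : ∀ i, ∃ k, ∀ j ∈ S k, δ ≤ A i j)
    (y : Fin n → ℝ) (c : ℝ) (hc0 : 0 ≤ c) (hc : ∀ j, y j ≤ c)
    (hneg : ∀ k, ∃ j ∈ S k, y j ≤ 0) (i : Fin n) :
    A.mulVec y i ≤ (1 - δ) * c := by
  obtain ⟨k, hk⟩ := hA i
  obtain ⟨j0, hj0S, hj0⟩ := hneg k
  have hv : A.mulVec y i = ∑ j, A i j * y j := by simp [Matrix.mulVec, dotProduct]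
  have hsplit : ∑ j, A i j * y j
      = A i j0 * y j0 + ∑ j ∈ univ.erase j0, A i j * y j :=
    (Finset.add_sum_erase _ _ (mem_univ j0)).symm
  have h1 : ∑ j ∈ univ.erase j0, A i j * y j ≤ ∑ j ∈ univ.erase j0, A i j * c :=
    Finset.sum_le_sum fun j _ => mul_le_mul_of_nonneg_left (hc j) (hnn i j)
  have h2 : ∑ j ∈ univ.erase j0, A i j = 1 - A i j0 := by
    have := Finset.add_sum_erase univ (fun j => A i j) (mem_univ j0)
    linarith [hrow i, this]
  have h5 : ∑ j ∈ univ.erase j0, A i j * c = (1 - A i j0) * c := by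
    rw [← Finset.sum_mul, h2]
  have h3 : A i j0 * y j0 ≤ 0 :=
    mul_nonpos_of_nonneg_of_nonpos (hnn i j0) hj0
  have h4 : (1 - A i j0) * c ≤ (1 - δ) * c := by
    have := hk j0 hj0S
    nlinarith
  calc A.mulVec y i = A i j0 * y j0 + ∑ j ∈ univ.erase j0, A i j * y j := by rw [hv, hsplit]
    _ ≤ 0 + (1 - A i j0) * c := by linarith
    _ ≤ (1 - δ) * c := by linarith

lemma aux_pow_nonneg {n : ℕ} (A : Matrix (Fin n) (Fin n) ℝ)
    (hA : ∀ i j, 0 ≤ A i j) : ∀ t, ∀ i j, 0 ≤ (A ^ t) i j := by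
  intro t
  induction t with
  | zero => intro i j; simp [Matrix.one_apply]; split <;> norm_num
  | succ t ih =>
    intro i j
    rw [pow_succ, Matrix.mul_apply]
    exact Finset.sum_nonneg fun k _ => mul_nonneg (ih i k) (hA k j)

lemma aux_pow_rowsum {n : ℕ} (A : Matrix (Fin n) (Fin n) ℝ)
    (hrow : ∀ i, ∑ j, A i j = 1) : ∀ t, ∀ i, ∑ j, (A ^ t) i j = 1 := by
  intro t
  induction t with
  | zero => intro i; simp [Matrix.one_apply]
  | succ t ih =>
    intro i
    rw [pow_succ]
    simp only [Matrix.mul_apply]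
    rw [Finset.sum_comm]
    calc ∑ k, ∑ j, (A ^ t) i k * A k j = ∑ k, (A ^ t) i k * ∑ j, A k j := by
          simp [Finset.mul_sum]
      _ = 1 := by simp [hrow, ih i]

lemma aux_pow_pos_mono {n : ℕ} (A : Matrix (Fin n) (Fin n) ℝ)
    (hA : ∀ i j, 0 ≤ A i j) (hdiag : ∀ i, 0 < A i i) {i j : Fin n} :
    ∀ t t', t ≤ t' → 0 < (A ^ t) i j → 0 < (A ^ t') i j := by
  intro t t' h hp
  induction t', h using Nat.le_induction with
  | base => exact hp
  | succ m hm ih =>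
    rw [pow_succ]
    calc (0:ℝ) < (A ^ m) i j * A j j := mul_pos ih (hdiag j)
      _ ≤ (A ^ m * A) i j := by
          rw [Matrix.mul_apply]
          exact Finset.single_le_sum (fun k _ => mul_nonneg (aux_pow_nonneg A hA m i k) (hA k j)) (mem_univ j)


/-- Under the sink structure hypotheses, for every `α ∈ (0,1)` and every
initial state `x(0)`, the averaging dynamics `x(t) = P_α^t x(0)` converges to `H x̄`,
where `x̄_k = ∑_{i ∈ S_k} π^{(k)}_i x_i(0)`. -/
theorem stmt_6 {n s : ℕ} (hn : 1 ≤ n) (hs : 1 ≤ s)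
    (W : Matrix (Fin n) (Fin n) ℝ)
    (hWnn : ∀ i j, 0 ≤ W i j)
    (hrow : ∀ i, 0 < ∑ j, W i j)
    (S : Fin s → Finset (Fin n))
    (hSne : ∀ k, (S k).Nonempty)
    (hSdisj : ∀ k l, k ≠ l → Disjoint (S k) (S l))
    (hsink : ∀ k, ∀ i ∈ S k, ∀ j, j ∉ S k → W i j = 0)
    (hSirr : ∀ k, ∀ i ∈ S k, ∀ j ∈ S k, i ≠ j →
      Relation.TransGen (fun a b => a ∈ S k ∧ b ∈ S k ∧ 0 < W a b) i j)
    (hreach : ∀ i : Fin n, (∀ k, i ∉ S k) →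
      ∃ j : Fin n, (∃ k, j ∈ S k) ∧ Relation.TransGen (fun a b => 0 < W a b) i j)
    (P : Matrix (Fin n) (Fin n) ℝ)
    (hP : ∀ i j, P i j = W i j / ∑ k, W i k)
    (L : Matrix (Fin n) (Fin n) ℝ)
    (hL : L = Matrix.diagonal (fun i => ∑ j, W i j) - W)
    -- H : the unique nonnegative matrix with H𝟙 = 𝟙, LH = 0 and boundary values
    (H : Matrix (Fin n) (Fin s) ℝ)
    (hHnn : ∀ i k, 0 ≤ H i k)
    (hHrow : ∀ i, ∑ k, H i k = 1)
    (hLH : L * H = 0)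
    (hHone : ∀ k, ∀ i ∈ S k, H i k = 1)
    (hHzero : ∀ k l, l ≠ k → ∀ i ∈ S l, H i k = 0)
    -- π^{(k)} : the unique invariant probability vector of the restriction of P to S_k
    (π : Fin s → Fin n → ℝ)
    (hπsupp : ∀ k, ∀ i, i ∉ S k → π k i = 0)
    (hπnn : ∀ k i, 0 ≤ π k i)
    (hπsum : ∀ k, ∑ i ∈ S k, π k i = 1)
    (hπinv : ∀ k, ∀ j ∈ S k, ∑ i ∈ S k, π k i * P i j = π k j)
    (α : ℝ) (hα : α ∈ Set.Ioo (0 : ℝ) 1)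
    (Pα : Matrix (Fin n) (Fin n) ℝ)
    (hPα : Pα = α • (1 : Matrix (Fin n) (Fin n) ℝ) + (1 - α) • P)
    (x0 : Fin n → ℝ) (xbar : Fin s → ℝ)
    (hxbar : ∀ k, xbar k = ∑ i ∈ S k, π k i * x0 i) :
    Filter.Tendsto (fun t : ℕ => (Pα ^ t).mulVec x0) Filter.atTop
      (nhds (H.mulVec xbar)) := by
  obtain ⟨hα0, hα1⟩ := hα
  have i0 : Fin n := ⟨0, hn⟩
  -- basic facts about P
  have hPnn : ∀ i j, 0 ≤ P i j := fun i j => by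
    rw [hP]; exact div_nonneg (hWnn i j) (le_of_lt (hrow i))
  have hProw : ∀ i, ∑ j, P i j = 1 := fun i => by
    simp only [hP]; rw [← Finset.sum_div]; exact div_self (ne_of_gt (hrow i))
  have hPαe : ∀ i j, Pα i j = α * (if i = j then 1 else 0) + (1 - α) * P i j := fun i j => by
    rw [hPα]; simp [Matrix.add_apply, Matrix.smul_apply, Matrix.one_apply]
  have hPαnn : ∀ i j, 0 ≤ Pα i j := fun i j => by
    rw [hPαe]
    have h1 : (0:ℝ) ≤ (if i = j then (1:ℝ) else 0) := by split <;> norm_num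
    have := hPnn i j
    nlinarith
  have hPαrow : ∀ i, ∑ j, Pα i j = 1 := fun i => by
    simp only [hPαe]
    rw [Finset.sum_add_distrib, ← Finset.mul_sum, ← Finset.mul_sum, hProw i]
    simp
  have hPαdiag : ∀ i, 0 < Pα i i := fun i => by
    have h1 : (if i = i then (1:ℝ) else 0) = 1 := if_pos rfl
    rw [hPαe i i, h1]
    nlinarith [hPnn i i]
  have hPαposW : ∀ i j, 0 < W i j → 0 < Pα i j := fun i j h => by
    have hp : 0 < P i j := by rw [hP]; exact div_pos h (hrow i)
    rw [hPαe]
    have h1 : (0:ℝ) ≤ (if i = j then (1:ℝ) else 0) := by split <;> norm_num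
    nlinarith
  -- positivity along paths
  have htrans : ∀ i j : Fin n, Relation.TransGen (fun a b => 0 < W a b) i j →
      ∃ t, 0 < (Pα ^ t) i j := by
    intro i j h
    induction h with
    | single hb => exact ⟨1, by rw [pow_one]; exact hPαposW _ _ hb⟩
    | tail h2 hb ih =>
      obtain ⟨t, ht⟩ := ih
      refine ⟨t + 1, ?_⟩
      rw [pow_succ]
      exact lt_of_lt_of_le (mul_pos ht (hPαposW _ _ hb))
        (aux_mul_entry_ge _ _ (aux_pow_nonneg Pα hPαnn t) hPαnn _ _ _)
  have hcover : ∀ i : Fin n, ∃ k, ∀ j ∈ S k, ∃ t, 0 < (Pα ^ t) i j := by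
    intro i
    by_cases hi : ∃ k, i ∈ S k
    · obtain ⟨k, hik⟩ := hi
      refine ⟨k, fun j hj => ?_⟩
      by_cases hij : i = j
      · exact ⟨1, by rw [pow_one]; subst hij; exact hPαdiag i⟩
      · exact htrans i j (Relation.TransGen.mono (by intro a b h; exact h.2.2) _ _ (hSirr k i hik j hj hij))
    · push_neg at hi
      obtain ⟨j0, ⟨k, hj0k⟩, hpath⟩ := hreach i hi
      obtain ⟨t0, ht0⟩ := htrans i j0 hpath
      refine ⟨k, fun j hj => ?_⟩
      by_cases hjj : j0 = j
      · exact ⟨t0, hjj ▸ ht0⟩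
      · obtain ⟨t1, ht1⟩ := htrans j0 j
          (Relation.TransGen.mono (by intro a b h; exact h.2.2) _ _ (hSirr k j0 hj0k j hj hjj))
        refine ⟨t0 + t1, ?_⟩
        rw [pow_add]
        exact lt_of_lt_of_le (mul_pos ht0 ht1)
          (aux_mul_entry_ge _ _ (aux_pow_nonneg Pα hPαnn t0) (aux_pow_nonneg Pα hPαnn t1) i j0 j)
  choose k hk using hcover
  have hcover2 : ∀ i j : Fin n, ∃ t, (j ∈ S (k i) → 0 < (Pα ^ t) i j) := by
    intro i j
    by_cases h : j ∈ S (k i)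
    · obtain ⟨t, ht⟩ := hk i j h; exact ⟨t, fun _ => ht⟩
    · exact ⟨0, fun h' => absurd h' h⟩
  choose T hT using hcover2
  set m : ℕ := 1 + Finset.univ.sup (fun i => Finset.univ.sup (T i)) with hmdef
  have hm0 : 0 < m := by omega
  have hmT : ∀ i j, T i j ≤ m := by
    intro i j
    have h1 : T i j ≤ Finset.univ.sup (T i) := Finset.le_sup (mem_univ j)
    have h2 : Finset.univ.sup (T i) ≤ Finset.univ.sup (fun i => Finset.univ.sup (T i)) :=
      Finset.le_sup (f := fun i => Finset.univ.sup (T i)) (mem_univ i)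
    omega
  have hQpos : ∀ i, ∀ j ∈ S (k i), 0 < (Pα ^ m) i j := fun i j hj =>
    aux_pow_pos_mono Pα hPαnn hPαdiag _ _ (hmT i j) (hT i j hj)
  have hQnn : ∀ i j, 0 ≤ (Pα ^ m) i j := aux_pow_nonneg Pα hPαnn m
  have hQrow : ∀ i, ∑ j, (Pα ^ m) i j = 1 := aux_pow_rowsum Pα hPαrow m
  -- δ
  have hne : (univ : Finset (Fin n)).Nonempty := ⟨i0, mem_univ _⟩
  set g : Fin n → ℝ := fun i => (S (k i)).inf' (hSne (k i)) (fun j => (Pα ^ m) i j) with hgdef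
  have hgpos : ∀ i, 0 < g i := fun i => by
    rw [hgdef]; rw [Finset.lt_inf'_iff]; exact fun j hj => hQpos i j hj
  set δ : ℝ := univ.inf' hne g with hδdef
  have hδpos : 0 < δ := by
    rw [hδdef, Finset.lt_inf'_iff]; exact fun i _ => hgpos i
  have hδle : ∀ i, ∀ j ∈ S (k i), δ ≤ (Pα ^ m) i j := fun i j hj =>
    le_trans (Finset.inf'_le g (mem_univ i)) (Finset.inf'_le _ hj)
  have hδ1 : δ ≤ 1 := by
    obtain ⟨j, hj⟩ := hSne (k i0)
    have h1 : (Pα ^ m) i0 j ≤ 1 := by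
      have := Finset.single_le_sum (f := fun l => (Pα ^ m) i0 l) (fun l _ => hQnn i0 l) (mem_univ j)
      rw [hQrow i0] at this; exact this
    exact le_trans (hδle i0 j hj) h1
  have hApos : ∀ i, ∃ kk, ∀ j ∈ S kk, δ ≤ (Pα ^ m) i j := fun i => ⟨k i, hδle i⟩
  -- invariant subspace
  set Yp : (Fin n → ℝ) → Prop := fun y => ∀ k', ∑ i ∈ S k', π k' i * y i = 0 with hYpdef
  have hPsink : ∀ k', ∀ i ∈ S k', ∀ j, j ∉ S k' → P i j = 0 := fun k' i hi j hj => by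
    rw [hP, hsink k' i hi j hj, zero_div]
  have hPαmv : ∀ y : Fin n → ℝ, Pα.mulVec y = α • y + (1 - α) • P.mulVec y := fun y => by
    rw [hPα, Matrix.add_mulVec, Matrix.smul_mulVec, Matrix.smul_mulVec,
      Matrix.one_mulVec]
  have hYstep : ∀ y, Yp y → Yp (Pα.mulVec y) := by
    intro y hy k'
    have h1 : ∀ i ∈ S k', P.mulVec y i = ∑ j ∈ S k', P i j * y j := by
      intro i hi
      have : P.mulVec y i = ∑ j, P i j * y j := by simp [Matrix.mulVec, dotProduct]
      rw [this]
      refine (Finset.sum_subset (Finset.subset_univ (S k')) ?_).symm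
      intro j _ hj
      rw [hPsink k' i hi j hj, zero_mul]
    have h2 : ∑ i ∈ S k', π k' i * P.mulVec y i = 0 := by
      calc ∑ i ∈ S k', π k' i * P.mulVec y i
          = ∑ i ∈ S k', ∑ j ∈ S k', π k' i * (P i j * y j) := by
            refine Finset.sum_congr rfl fun i hi => ?_
            rw [h1 i hi, Finset.mul_sum]
        _ = ∑ j ∈ S k', (∑ i ∈ S k', π k' i * P i j) * y j := by
            rw [Finset.sum_comm]
            refine Finset.sum_congr rfl fun j hj => ?_
            rw [Finset.sum_mul]
            refine Finset.sum_congr rfl fun i hi => ?_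
            ring
        _ = ∑ j ∈ S k', π k' j * y j := by
            refine Finset.sum_congr rfl fun j hj => ?_
            rw [hπinv k' j hj]
        _ = 0 := hy k'
    calc ∑ i ∈ S k', π k' i * Pα.mulVec y i
        = ∑ i ∈ S k', (α * (π k' i * y i) + (1 - α) * (π k' i * P.mulVec y i)) := by
          refine Finset.sum_congr rfl fun i hi => ?_
          rw [hPαmv y]; simp [Pi.add_apply, Pi.smul_apply]; ring
      _ = α * ∑ i ∈ S k', π k' i * y i + (1 - α) * ∑ i ∈ S k', π k' i * P.mulVec y i := by
          rw [Finset.sum_add_distrib, Finset.mul_sum, Finset.mul_sum]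
      _ = 0 := by rw [hy k', h2]; ring
  have hsign : ∀ y : Fin n → ℝ, Yp y → ∀ k', ∃ j ∈ S k', y j ≤ 0 := by
    intro y hy k'
    by_contra h
    push_neg at h
    have hex : ∃ j ∈ S k', 0 < π k' j := by
      by_contra h2
      push_neg at h2
      have : ∑ i ∈ S k', π k' i = 0 :=
        Finset.sum_eq_zero fun i hi => le_antisymm (h2 i hi) (hπnn k' i)
      rw [hπsum k'] at this; norm_num at this
    obtain ⟨j, hjS, hjpos⟩ := hex
    have hpos : 0 < ∑ i ∈ S k', π k' i * y i :=
      Finset.sum_pos' (fun i hi => mul_nonneg (hπnn k' i) (le_of_lt (h i hi)))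
        ⟨j, hjS, mul_pos hjpos (h j hjS)⟩
    rw [hy k'] at hpos; exact lt_irrefl 0 hpos
  -- Pα * H = H
  have hDH : Matrix.diagonal (fun i => ∑ j, W i j) * H = W * H := by
    have h := hLH
    rw [hL, Matrix.sub_mul, sub_eq_zero] at h
    exact h
  have hWHe : ∀ i l, (W * H) i l = (∑ j, W i j) * H i l := by
    intro i l
    have := congrFun (congrFun hDH i) l
    rw [← this, Matrix.diagonal_mul]
  have hPH : P * H = H := by
    ext i l
    rw [Matrix.mul_apply]
    simp only [hP]
    calc ∑ j, W i j / (∑ kk, W i kk) * H j l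
        = (∑ j, W i j * H j l) / (∑ kk, W i kk) := by
          rw [Finset.sum_div]
          exact Finset.sum_congr rfl fun j _ => by ring
      _ = ((W * H) i l) / (∑ kk, W i kk) := by rw [Matrix.mul_apply]
      _ = ((∑ kk, W i kk) * H i l) / (∑ kk, W i kk) := by rw [hWHe]
      _ = H i l := by
          rw [mul_comm, mul_div_assoc, div_self (ne_of_gt (hrow i)), mul_one]
  have hPαH : Pα * H = H := by
    rw [hPα, Matrix.add_mul, Matrix.smul_mul, Matrix.smul_mul, Matrix.one_mul, hPH]
    ext i l
    simp [Matrix.add_apply, Matrix.smul_apply]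
    ring
  have hPαtH : ∀ t, Pα ^ t * H = H := by
    intro t
    induction t with
    | zero => rw [pow_zero, Matrix.one_mul]
    | succ t ih => rw [pow_succ', Matrix.mul_assoc, ih, hPαH]
  -- H xbar is constant on sinks
  have hHx : ∀ k', ∀ i ∈ S k', H.mulVec xbar i = xbar k' := by
    intro k' i hi
    have h1 : H.mulVec xbar i = ∑ l, H i l * xbar l := by simp [Matrix.mulVec, dotProduct]
    rw [h1, Finset.sum_eq_single k']
    · rw [hHone k' i hi, one_mul]
    · intro l _ hl
      rw [hHzero l k' (Ne.symm hl) i hi, zero_mul]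
    · intro h; exact absurd (mem_univ k') h
  -- the error vector
  set y : Fin n → ℝ := fun i => x0 i - H.mulVec xbar i with hydef
  have hYy : Yp y := by
    intro k'
    calc ∑ i ∈ S k', π k' i * y i
        = ∑ i ∈ S k', (π k' i * x0 i - π k' i * xbar k') := by
          refine Finset.sum_congr rfl fun i hi => ?_
          rw [hydef]; simp only []
          rw [hHx k' i hi]; ring
      _ = (∑ i ∈ S k', π k' i * x0 i) - (∑ i ∈ S k', π k' i) * xbar k' := by
          rw [Finset.sum_sub_distrib, Finset.sum_mul]
      _ = 0 := by rw [← hxbar k', hπsum k']; ring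
  have hYt : ∀ t, Yp ((Pα ^ t).mulVec y) := by
    intro t
    induction t with
    | zero => simpa using hYy
    | succ t ih =>
      have : (Pα ^ (t + 1)).mulVec y = Pα.mulVec ((Pα ^ t).mulVec y) := by
        rw [pow_succ', ← Matrix.mulVec_mulVec]
      rw [this]
      exact hYstep _ ih
  -- sup norm bound
  set C : ℝ := univ.sup' hne (fun j => |y j|) with hCdef
  have hCle : ∀ j, |y j| ≤ C := fun j => by
    rw [hCdef]; exact Finset.le_sup' (fun j => |y j|) (mem_univ j)
  have hC0 : 0 ≤ C := le_trans (abs_nonneg _) (hCle i0)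
  have hδ1' : 0 ≤ 1 - δ := by linarith
  -- geometric decay along multiples of m
  have hqb : ∀ q, ∀ i, |((Pα ^ (m * q)).mulVec y) i| ≤ (1 - δ) ^ q * C := by
    intro q
    induction q with
    | zero => intro i; simpa using hCle i
    | succ q ih =>
      intro i
      have hrw : Pα ^ (m * (q + 1)) = Pα ^ m * Pα ^ (m * q) := by
        rw [← pow_add]
        congr 1
        ring
      set z : Fin n → ℝ := (Pα ^ (m * q)).mulVec y with hzdef
      have hz : (Pα ^ (m * (q + 1))).mulVec y = (Pα ^ m).mulVec z := by
        rw [hrw, ← Matrix.mulVec_mulVec]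
      rw [hz]
      have hcq : (0:ℝ) ≤ (1 - δ) ^ q * C := mul_nonneg (pow_nonneg hδ1' q) hC0
      have hYz : Yp z := hYt (m * q)
      have hYnz : Yp (-z) := by
        intro k'
        have := hYz k'
        simp only [Pi.neg_apply, mul_neg]
        rw [Finset.sum_neg_distrib, this, neg_zero]
      have hub : (Pα ^ m).mulVec z i ≤ (1 - δ) * ((1 - δ) ^ q * C) :=
        aux_contraction_upper S (Pα ^ m) hQnn hQrow δ hApos z _ hcq
          (fun j => (abs_le.1 (ih j)).2) (fun k' => hsign z hYz k') i
      have hlb : (Pα ^ m).mulVec (-z) i ≤ (1 - δ) * ((1 - δ) ^ q * C) :=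
        aux_contraction_upper S (Pα ^ m) hQnn hQrow δ hApos (-z) _ hcq
          (fun j => by simpa using neg_le.2 ((abs_le.1 (ih j)).1 : -((1-δ)^q*C) ≤ z j))
          (fun k' => hsign (-z) hYnz k') i
      rw [Matrix.mulVec_neg] at hlb
      have : |(Pα ^ m).mulVec z i| ≤ (1 - δ) * ((1 - δ) ^ q * C) := by
        rw [abs_le]
        constructor
        · simp only [Pi.neg_apply] at hlb; linarith
        · exact hub
      calc |(Pα ^ m).mulVec z i| ≤ (1 - δ) * ((1 - δ) ^ q * C) := this
        _ = (1 - δ) ^ (q + 1) * C := by ring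
  -- decay for all t
  have hbt : ∀ t : ℕ, ∀ i, |((Pα ^ t).mulVec y) i| ≤ (1 - δ) ^ (t / m) * C := by
    intro t i
    have hsplit : Pα ^ t = Pα ^ (t % m) * Pα ^ (m * (t / m)) := by
      rw [← pow_add, Nat.mod_add_div]
    rw [hsplit, ← Matrix.mulVec_mulVec]
    exact aux_mulVec_bound (Pα ^ (t % m)) (aux_pow_nonneg Pα hPαnn _)
      (aux_pow_rowsum Pα hPαrow _) _ _ (hqb (t / m)) i
  -- decomposition
  have hdecomp : ∀ t : ℕ, ∀ i, (Pα ^ t).mulVec x0 i = H.mulVec xbar i + ((Pα ^ t).mulVec y) i := by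
    intro t i
    have hx0 : x0 = (fun i => H.mulVec xbar i + y i) := by
      funext j; rw [hydef]; ring
    have h1 : (Pα ^ t).mulVec (H.mulVec xbar) = H.mulVec xbar := by
      rw [Matrix.mulVec_mulVec, hPαtH t]
    calc (Pα ^ t).mulVec x0 i
        = (Pα ^ t).mulVec (H.mulVec xbar) i + ((Pα ^ t).mulVec y) i := by
          conv_lhs => rw [hx0]
          rw [show (fun i => H.mulVec xbar i + y i) = H.mulVec xbar + y from rfl,
            Matrix.mulVec_add]
          rfl
      _ = H.mulVec xbar i + ((Pα ^ t).mulVec y) i := by rw [h1]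
  -- conclude
  rw [tendsto_pi_nhds]
  intro i
  have herr : Filter.Tendsto (fun t : ℕ => ((Pα ^ t).mulVec y) i) Filter.atTop (nhds 0) := by
    have hg : Filter.Tendsto (fun q : ℕ => (1 - δ) ^ q * C) Filter.atTop (nhds 0) := by
      have h1 : Filter.Tendsto (fun q : ℕ => (1 - δ) ^ q) Filter.atTop (nhds 0) :=
        tendsto_pow_atTop_nhds_zero_of_lt_one hδ1' (by linarith)
      simpa using h1.mul_const C
    have hdiv : Filter.Tendsto (fun t : ℕ => t / m) Filter.atTop Filter.atTop := by
      rw [Filter.tendsto_atTop_atTop]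
      intro b
      exact ⟨b * m, fun t ht => (Nat.le_div_iff_mul_le hm0).2 ht⟩
    refine squeeze_zero_norm (fun t => ?_) (hg.comp hdiv)
    simpa [Real.norm_eq_abs] using hbt t i
  have := herr.const_add (H.mulVec xbar i)
  simp only [add_zero] at this
  convert this using 2 with t
  · exact (hdecomp t i)
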